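/- Forward direction of Younsi's theorem on fingerprints of rational lemniscates. Let n ≥ 1, let P₁, P₂ ∈ ℂ[X] be coprime polynomials with deg P₁ = n and deg P₂ < n (so that R = P₁/P₂ is a rational function of degree n with R(∞) = ∞), and set Γ = {z ∈ ℂ : |P₁(z)| = |P₂(z)|} (the lemniscate L_R(1)). Suppose (φ₋, φ₊) is a conformal parametrization pair for Γ, every root of P₁ lies in Ω₋ = φ₋(𝔻), and every root of P₂ lies in Ω₊ = φ₊({w : |w| > 1}). Then: (i) there exist b_1, …, b_n ∈ 𝔻 and λ with |λ| = 1 such that P₁(φ₋(z))·∏_{k=1}^n (1 − conj(b_k)·z) = λ·P₂(φ₋(z))·∏_{k=1}^n (z − b_k) for all |z| ≤ 1, i.e. R∘φ₋ agrees on the closed unit disk with a finite Blaschke product B of degree n; (ii) there exist a_1, …, a_n ∈ 𝔻, with a_j = 0 for at least one index j, and μ with |μ| = 1, such that P₁(φ₊(w))·∏_{k=1}^n (1 − conj(a_k)·w) = μ·P₂(φ₊(w))·∏_{k=1}^n (w − a_k) for all |w| ≥ 1, i.e. R∘φ₊ agrees on {|w| ≥ 1} with a finite Blaschke product A of degree n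 satisfying A(∞) = ∞. Consequently the fingerprint k of Γ, determined by φ₊(k(z)) = φ₋(z) for z ∈ 𝕋, satisfies the functional equation A(k(z)) = B(z) for all z ∈ 𝕋. -/

import Mathlib

open Complex Metric Set Polynomial

section Auxiliary

open Filter Real

/-- An injective holomorphic function on an open set has nonvanishing derivative. -/
private lemma deriv_ne_zero_of_injOn {U : Set ℂ} (hU : IsOpen U) {f : ℂ → ℂ}
    (hf : DifferentiableOn ℂ f U) (hinj : InjOn f U) {z₀ : ℂ} (hz : z₀ ∈ U) :
    deriv f z₀ ≠ 0 := by
  have hUz : U ∈ nhds z₀ := hU.mem_nhds hz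
  have hAn : AnalyticAt ℂ f z₀ := hf.analyticAt hUz
  have hg : AnalyticAt ℂ (fun z => f z - f z₀) z₀ := hAn.sub analyticAt_const
  have hng : ¬ (∀ᶠ z in nhds z₀, f z - f z₀ = 0) := by
    intro hev
    have : ∀ᶠ z in nhdsWithin z₀ {z₀}ᶜ, (f z - f z₀ = 0 ∧ z ∈ U) ∧ z ≠ z₀ :=
      ((hev.and (hU.eventually_mem hz)).filter_mono nhdsWithin_le_nhds).and
        self_mem_nhdsWithin
    obtain ⟨z, ⟨hz0, hzU⟩, hzne⟩ := this.exists
    exact hzne (hinj hzU hz (by rwa [sub_eq_zero] at hz0))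
  have hord : analyticOrderAt (fun z => f z - f z₀) z₀ ≠ ⊤ := fun h =>
    hng (analyticOrderAt_eq_top.mp h)
  obtain ⟨k, hk⟩ : ∃ k : ℕ, analyticOrderAt (fun z => f z - f z₀) z₀ = k := by
    obtain ⟨a, ha⟩ := ENat.ne_top_iff_exists.mp hord
    exact ⟨a, ha.symm⟩
  obtain ⟨h, hhAn, hh0, hhev⟩ := hg.analyticOrderAt_eq_natCast.mp hk
  have hg0 : f z₀ - f z₀ = 0 := sub_self _
  have hk0 : k ≠ 0 := by
    rintro rfl
    simp only [pow_zero, one_smul] at hhev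
    have := hhev.self_of_nhds
    rw [hg0] at this
    exact hh0 this.symm
  rcases eq_or_lt_of_le (Nat.one_le_iff_ne_zero.mpr hk0) with hk1 | hk2
  · -- k = 1 : deriv f z₀ = h z₀ ≠ 0
    have hev1 : (fun z => f z - f z₀) =ᶠ[nhds z₀] (fun z => (z - z₀) * h z) := by
      filter_upwards [hhev] with z hz'
      rw [hz', ← hk1, pow_one, smul_eq_mul]
    have H : HasDerivAt (fun z => (z - z₀) * h z) (h z₀) z₀ := by
      have := ((hasDerivAt_id z₀).sub_const z₀).mul hhAn.differentiableAt.hasDerivAt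
      have e : 1 * h z₀ + (id z₀ - z₀) * deriv h z₀ = h z₀ := by simp
      rw [e] at this
      exact this
    have hd : deriv (fun z => f z - f z₀) z₀ = h z₀ := by
      rw [hev1.deriv_eq]; exact H.deriv
    have hds : deriv (fun z => f z - f z₀) z₀ = deriv f z₀ := deriv_sub_const _
    rw [← hds, hd]; exact hh0
  · -- k ≥ 2 : contradiction with injectivity
    exfalso
    have hkC : (k : ℂ) ≠ 0 := Nat.cast_ne_zero.mpr hk0
    set ρ : ℂ → ℂ := fun z =>
      Complex.exp ((k : ℂ)⁻¹ * Complex.log (h z₀)) *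
        Complex.exp ((k : ℂ)⁻¹ * Complex.log (h z / h z₀)) with hρdef
    have hρAn : AnalyticAt ℂ ρ z₀ := by
      apply analyticAt_const.mul
      apply analyticAt_cexp.comp
      apply analyticAt_const.mul
      apply (analyticAt_clog ?_).comp (hhAn.div analyticAt_const hh0)
      simp [div_self hh0]
    have hρ0 : ∀ z, ρ z ≠ 0 := fun z => mul_ne_zero (Complex.exp_ne_zero _) (Complex.exp_ne_zero _)
    have hρk : ∀ᶠ z in nhds z₀, (ρ z) ^ k = h z := by
      have hhne : ∀ᶠ z in nhds z₀, h z ≠ 0 := hhAn.continuousAt.eventually_ne hh0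
      filter_upwards [hhne] with z hzne
      have e1 : ∀ x : ℂ, (Complex.exp ((k : ℂ)⁻¹ * x)) ^ k = Complex.exp x := by
        intro x
        rw [← Complex.exp_nat_mul]
        congr 1
        field_simp
      rw [hρdef]
      simp only [mul_pow, e1]
      rw [Complex.exp_log hh0, Complex.exp_log (div_ne_zero hzne hh0)]
      field_simp
    set ψ : ℂ → ℂ := fun z => (z - z₀) * ρ z with hψdef
    have hψAn : AnalyticAt ℂ ψ z₀ := (analyticAt_id.sub analyticAt_const).mul hρAn
    have hψ0 : ψ z₀ = 0 := by simp [hψdef]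
    have hψne : ∀ z, z ≠ z₀ → ψ z ≠ 0 := fun z hz' =>
      mul_ne_zero (sub_ne_zero.mpr hz') (hρ0 z)
    have hgψ : ∀ᶠ z in nhds z₀, f z - f z₀ = (ψ z) ^ k := by
      filter_upwards [hhev, hρk] with z h1 h2
      rw [h1, hψdef]; simp only [mul_pow, smul_eq_mul, h2]
    have hmap : nhds (ψ z₀) ≤ Filter.map ψ (nhds z₀) := by
      rcases hψAn.eventually_constant_or_nhds_le_map_nhds with hc | hle
      · exfalso
        have : ∀ᶠ z in nhdsWithin z₀ {z₀}ᶜ, ψ z = ψ z₀ ∧ z ≠ z₀ :=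
          (hc.filter_mono nhdsWithin_le_nhds).and self_mem_nhdsWithin
        obtain ⟨z, hz1, hz2⟩ := this.exists
        exact hψne z hz2 (hz1.trans hψ0)
      · exact hle
    set W : Set ℂ := {z | z ∈ U ∧ f z - f z₀ = ψ z ^ k} with hWdef
    have hW : W ∈ nhds z₀ := (hU.eventually_mem hz).and hgψ
    have hWim : ψ '' W ∈ nhds (0 : ℂ) := by
      rw [← hψ0]
      exact hmap (image_mem_map hW)
    obtain ⟨ε, hε, hball⟩ := Metric.mem_nhds_iff.mp hWim
    set w : ℂ := ((ε / 2 : ℝ) : ℂ) with hwdef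
    have hwne : w ≠ 0 := by
      simp only [hwdef, ne_eq, Complex.ofReal_eq_zero]
      positivity
    have hwnorm : ‖w‖ = ε / 2 := by
      rw [hwdef, Complex.norm_real, Real.norm_eq_abs, abs_of_pos (by positivity)]
    have hwmem : w ∈ ball (0 : ℂ) ε := by
      rw [mem_ball_zero_iff, hwnorm]; linarith
    set ω : ℂ := Complex.exp (2 * (π : ℂ) * I / k) with hωdef
    have hωk : ω ^ k = 1 := by
      rw [hωdef, ← Complex.exp_nat_mul,
        show (k : ℂ) * (2 * (π : ℂ) * I / k) = 2 * π * I by field_simp]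
      exact Complex.exp_two_pi_mul_I
    have hωne1 : ω ≠ 1 := by
      intro h1
      rw [hωdef, Complex.exp_eq_one_iff] at h1
      obtain ⟨m, hm⟩ := h1
      rw [div_eq_iff hkC] at hm
      have h2pi : (2 * (π : ℂ) * I) ≠ 0 := Complex.two_pi_I_ne_zero
      have hmk : (1 : ℂ) = (m : ℂ) * k := by
        have h1 : (2 * (π : ℂ) * I) * 1 = (2 * (π : ℂ) * I) * ((m : ℂ) * k) := by
          linear_combination hm
        exact mul_left_cancel₀ h2pi h1
      have hmkZ : (1 : ℤ) = m * k := by exact_mod_cast hmk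
      have hdvd : (k : ℤ) ∣ 1 := Dvd.intro_left m hmkZ.symm
      have := Int.le_of_dvd one_pos hdvd
      omega
    have hωnorm : ‖ω‖ = 1 := by
      rw [hωdef, Complex.norm_exp]
      have : (2 * (π : ℂ) * I / k).re = 0 := by
        simp [Complex.div_re, Complex.mul_re, Complex.mul_im]
      rw [this, Real.exp_zero]
    have hωwmem : ω * w ∈ ball (0 : ℂ) ε := by
      rw [mem_ball_zero_iff, norm_mul, hωnorm, one_mul, hwnorm]; linarith
    obtain ⟨z₁, hz₁W, hz₁⟩ := hball hwmem
    obtain ⟨z₂, hz₂W, hz₂⟩ := hball hωwmem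
    have hzne : z₁ ≠ z₂ := by
      rintro rfl
      have hww : (ω - 1) * w = 0 := by
        have := hz₁.symm.trans hz₂
        linear_combination -this
      rcases mul_eq_zero.mp hww with h | h
      · exact hωne1 (by linear_combination h)
      · exact hwne h
    have hfz : f z₁ = f z₂ := by
      have e1 : f z₁ - f z₀ = w ^ k := by rw [hz₁W.2, hz₁]
      have e2 : f z₂ - f z₀ = w ^ k := by
        rw [hz₂W.2, hz₂, mul_pow, hωk, one_mul]
      exact sub_left_inj.mp (e1.trans e2.symm)
    exact hzne (hinj hz₁W.1 hz₂W.1 hfz)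

/-- Enumeration of the roots (with multiplicity) of a complex polynomial. -/
private lemma poly_enum (P : ℂ[X]) :
    ∃ r : Fin P.natDegree → ℂ,
      (∀ x : ℂ, P.eval x = P.leadingCoeff * ∏ i, (x - r i)) ∧ ∀ i, P.eval (r i) = 0 := by
  have hcard : P.roots.card = P.natDegree :=
    Polynomial.splits_iff_card_roots.mp (IsAlgClosed.splits P)
  set L := P.roots.toList with hLdef
  have hLcoe : (L : Multiset ℂ) = P.roots := Multiset.coe_toList _
  have hlen : L.length = P.natDegree := by
    rw [← hcard, ← hLcoe]; simp
  refine ⟨fun i => L.get (Fin.cast hlen.symm i), ?_, ?_⟩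
  · intro x
    have hfac := Polynomial.C_leadingCoeff_mul_prod_multiset_X_sub_C (p := P) hcard
    have := congrArg (Polynomial.eval x) hfac
    rw [Polynomial.eval_mul, Polynomial.eval_C, Polynomial.eval_multiset_prod] at this
    rw [← this]
    congr 1
    rw [Multiset.map_map, ← hLcoe]
    have hml : ∀ g : ℂ → ℂ, ((L : Multiset ℂ).map g).prod = (L.map g).prod := fun g => rfl
    rw [hml]
    have h1 : L = List.ofFn L.get := (List.ofFn_get L).symm
    conv_lhs => rw [h1]
    rw [List.map_ofFn, List.prod_ofFn]
    rw [← Fin.prod_congr' _ hlen]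
    apply Finset.prod_congr rfl
    intro i _
    simp [Polynomial.eval_sub, Polynomial.eval_comp]
  · intro i
    have hmem : L.get (Fin.cast hlen.symm i) ∈ L := List.get_mem L _
    have : L.get (Fin.cast hlen.symm i) ∈ P.roots := by rw [← hLcoe]; exact_mod_cast hmem
    exact (Polynomial.isRoot_of_mem_roots this)

/-- On the unit circle, `‖1 - conj b * z‖ = ‖z - b‖`. -/
private lemma norm_one_sub_conj_mul {z b : ℂ} (hz : ‖z‖ = 1) :
    ‖1 - (starRingEnd ℂ) b * z‖ = ‖z - b‖ := by
  have hzz : (starRingEnd ℂ) z * z = 1 := by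
    rw [← Complex.normSq_eq_conj_mul_self]
    norm_cast
    rw [Complex.normSq_eq_norm_sq, hz]; norm_num
  have h1 : (starRingEnd ℂ) z * (z - b) = 1 - b * (starRingEnd ℂ) z := by
    linear_combination hzz
  have h2 : ‖1 - (starRingEnd ℂ) b * z‖ = ‖(starRingEnd ℂ) (1 - (starRingEnd ℂ) b * z)‖ :=
    (RCLike.norm_conj _).symm
  rw [h2, map_sub, map_one, map_mul, Complex.conj_conj, ← h1, norm_mul, RCLike.norm_conj, hz,
    one_mul]

private lemma one_sub_conj_mul_ne_zero {z b : ℂ} (hb : ‖b‖ < 1) (hz : ‖z‖ ≤ 1) :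
    1 - (starRingEnd ℂ) b * z ≠ 0 := by
  intro h
  have h1 : (1 : ℂ) = (starRingEnd ℂ) b * z := by linear_combination h
  have : (1 : ℝ) = ‖(starRingEnd ℂ) b * z‖ := by rw [← h1]; simp
  rw [norm_mul, RCLike.norm_conj] at this
  nlinarith [norm_nonneg b, norm_nonneg z]

/-- A zero-free holomorphic function on the disk, continuous up to the boundary and of
unit modulus on the circle, is a unimodular constant. -/
private lemma eq_const_of_unimodular_boundary {H : ℂ → ℂ}
    (hd : DiffContOnCl ℂ H (ball (0:ℂ) 1))
    (hne : ∀ z ∈ closedBall (0:ℂ) 1, H z ≠ 0)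
    (hb : ∀ z ∈ sphere (0:ℂ) 1, ‖H z‖ = 1) :
    ‖H 0‖ = 1 ∧ ∀ z ∈ closedBall (0:ℂ) 1, H z = H 0 := by
  have hfr : frontier (ball (0:ℂ) 1) = sphere 0 1 := frontier_ball 0 one_ne_zero
  have hcl : closure (ball (0:ℂ) 1) = closedBall 0 1 := closure_ball 0 one_ne_zero
  have hle : ∀ z ∈ closedBall (0:ℂ) 1, ‖H z‖ ≤ 1 := by
    intro z hz
    refine Complex.norm_le_of_forall_mem_frontier_norm_le isBounded_ball hd ?_ ?_
    · intro w hw; rw [hfr] at hw; exact (hb w hw).le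
    · rwa [hcl]
  have hinv : DiffContOnCl ℂ (fun z => (H z)⁻¹) (ball (0:ℂ) 1) := by
    refine ⟨hd.differentiableOn.inv ?_, ?_⟩
    · intro z hz; exact hne z (ball_subset_closedBall hz)
    · rw [hcl]
      exact (hd.continuousOn.mono (by rw [hcl])).inv₀ hne
  have hge : ∀ z ∈ closedBall (0:ℂ) 1, 1 ≤ ‖H z‖ := by
    intro z hz
    have : ‖(H z)⁻¹‖ ≤ 1 := by
      refine Complex.norm_le_of_forall_mem_frontier_norm_le isBounded_ball hinv ?_ ?_
      · intro w hw; rw [hfr] at hw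
        rw [norm_inv, hb w hw]; norm_num
      · rwa [hcl]
    rw [norm_inv] at this
    have hpos : 0 < ‖H z‖ := norm_pos_iff.mpr (hne z hz)
    rw [inv_le_one_iff₀] at this
    rcases this with h | h
    · exfalso; linarith
    · exact h
  have heq : ∀ z ∈ closedBall (0:ℂ) 1, ‖H z‖ = 1 := fun z hz =>
    le_antisymm (hle z hz) (hge z hz)
  have hmax : IsMaxOn (norm ∘ H) (ball (0:ℂ) 1) 0 := by
    intro z hz
    have h1 := heq z (ball_subset_closedBall hz)
    have h2 := heq 0 (mem_closedBall_self zero_le_one)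
    simp only [Set.mem_setOf_eq, Function.comp_apply, h1, h2, le_refl]
  have := Complex.eqOn_closedBall_of_isMaxOn_norm hd hmax
  exact ⟨heq 0 (mem_closedBall_self zero_le_one), fun z hz => this hz⟩

end Auxiliary

/-- A conformal parametrization pair for a Jordan curve `Γ ⊂ ℂ`. -/
structure ConformalPair (Γ : Set ℂ) (φm φp : ℂ → ℂ) : Prop where
  contm : ContinuousOn φm (closedBall 0 1)
  injm : InjOn φm (closedBall 0 1)
  holm : DifferentiableOn ℂ φm (ball 0 1)
  mapm : φm '' (sphere 0 1) = Γ
  contp : ContinuousOn φp {w : ℂ | 1 ≤ ‖w‖}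
  injp : InjOn φp {w : ℂ | 1 ≤ ‖w‖}
  holp : DifferentiableOn ℂ φp {w : ℂ | 1 < ‖w‖}
  mapp : φp '' (sphere 0 1) = Γ
  deriv_infty : ∃ d : ℝ, 0 < d ∧
    Filter.Tendsto (fun w => φp w / w) (Bornology.cobounded ℂ) (nhds (d : ℂ))
  disj_mp : Disjoint (φm '' ball 0 1) (φp '' {w : ℂ | 1 < ‖w‖})
  disj_mG : Disjoint (φm '' ball 0 1) Γ
  disj_pG : Disjoint (φp '' {w : ℂ | 1 < ‖w‖}) Γ
  union_eq : φm '' ball 0 1 ∪ Γ ∪ φp '' {w : ℂ | 1 < ‖w‖} = univ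

/-- Forward direction of Younsi's theorem on fingerprints of rational
lemniscates: `R∘φ₋` is a finite Blaschke product `B` of degree `n` on the closed
disk, `R∘φ₊` is a finite Blaschke product `A` of degree `n` with `A(∞) = ∞` on
the closed exterior, and the fingerprint `k` satisfies `A∘k = B` on the circle.
The Blaschke-product identities are stated in cleared-denominator form. -/
theorem younsi_forward (n : ℕ) (hn : 1 ≤ n) (P₁ P₂ : ℂ[X])
    (hcop : IsCoprime P₁ P₂) (hdeg1 : P₁.natDegree = n) (hdeg2 : P₂.natDegree < n)
    (φm φp : ℂ → ℂ)
    (hpair : ConformalPair {z : ℂ | ‖P₁.eval z‖ = ‖P₂.eval z‖} φm φp)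
    (hroots1 : ∀ z : ℂ, P₁.eval z = 0 → z ∈ φm '' (ball 0 1))
    (hroots2 : ∀ z : ℂ, P₂.eval z = 0 → z ∈ φp '' {w : ℂ | 1 < ‖w‖}) :
    ∃ (b : Fin n → ℂ) (lam : ℂ) (a : Fin n → ℂ) (mu : ℂ),
      (∀ i, ‖b i‖ < 1) ∧ ‖lam‖ = 1 ∧
      (∀ z : ℂ, ‖z‖ ≤ 1 →
        P₁.eval (φm z) * ∏ i, (1 - (starRingEnd ℂ) (b i) * z)
          = lam * (P₂.eval (φm z) * ∏ i, (z - b i))) ∧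
      (∀ i, ‖a i‖ < 1) ∧ (∃ j, a j = 0) ∧ ‖mu‖ = 1 ∧
      (∀ w : ℂ, 1 ≤ ‖w‖ →
        P₁.eval (φp w) * ∏ i, (1 - (starRingEnd ℂ) (a i) * w)
          = mu * (P₂.eval (φp w) * ∏ i, (w - a i))) ∧
      (∀ z w : ℂ, ‖z‖ = 1 → ‖w‖ = 1 → φp w = φm z →
        mu * ∏ i, (w - a i) / (1 - (starRingEnd ℂ) (a i) * w)
          = lam * ∏ i, (z - b i) / (1 - (starRingEnd ℂ) (b i) * z)) := by
  classical
  subst hdeg1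
  obtain ⟨contm, injm, holm, mapm, contp, injp, holp, mapp, hdinf, disj_mp, disj_mG, disj_pG,
    union_eq⟩ := hpair
  have hP1 : P₁ ≠ 0 := by
    intro h; rw [h, Polynomial.natDegree_zero] at hn; omega
  have hP2 : P₂ ≠ 0 := by
    intro h
    rw [h] at hcop
    have h1 := isCoprime_zero_right.mp hcop
    have h2 := Polynomial.natDegree_eq_zero_of_isUnit h1
    omega
  set c₁ := P₁.leadingCoeff with hc₁def
  have hc₁ : c₁ ≠ 0 := Polynomial.leadingCoeff_ne_zero.mpr hP1
  set c₂ := P₂.leadingCoeff with hc₂def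
  have hc₂ : c₂ ≠ 0 := Polynomial.leadingCoeff_ne_zero.mpr hP2
  set m := P₂.natDegree with hmdef
  set N := P₁.natDegree - m with hNdef
  obtain ⟨r, hreval, hrroot⟩ := poly_enum P₁
  obtain ⟨sfn, hseval, hsroot⟩ := poly_enum P₂
  -- Γ facts
  have hΓm : ∀ z ∈ sphere (0:ℂ) 1, ‖P₁.eval (φm z)‖ = ‖P₂.eval (φm z)‖ := by
    intro z hz
    have : φm z ∈ {z : ℂ | ‖P₁.eval z‖ = ‖P₂.eval z‖} := by
      rw [← mapm]; exact mem_image_of_mem _ hz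
    exact this
  -- ============ PART (i) ============
  have hζex : ∀ i, ∃ z, z ∈ ball (0:ℂ) 1 ∧ φm z = r i := by
    intro i
    obtain ⟨z, hz, he⟩ := hroots1 (r i) (hrroot i)
    exact ⟨z, hz, he⟩
  choose ζ hζball hζeq using hζex
  have hζnorm : ∀ i, ‖ζ i‖ < 1 := fun i => mem_ball_zero_iff.mp (hζball i)
  have hderivm : ∀ i, deriv φm (ζ i) ≠ 0 := fun i =>
    deriv_ne_zero_of_injOn isOpen_ball holm (injm.mono ball_subset_closedBall) (hζball i)
  set u : ℂ → ℂ := fun z => c₁ * ∏ i, dslope φm (ζ i) z with hudef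
  have key1 : ∀ z : ℂ, P₁.eval (φm z) = u z * ∏ i, (z - ζ i) := by
    intro z
    rw [hreval, hudef]
    simp only
    rw [mul_assoc, ← Finset.prod_mul_distrib]
    congr 1
    apply Finset.prod_congr rfl
    intro i _
    have hds := sub_smul_dslope φm (ζ i) z
    rw [smul_eq_mul] at hds
    rw [← hζeq i, ← hds]; ring
  have hSne : ∀ z ∈ closedBall (0:ℂ) 1, P₂.eval (φm z) ≠ 0 := by
    intro z hz h0
    have hmem := hroots2 (φm z) h0
    rw [← ball_union_sphere] at hz
    rcases hz with hz | hz
    · exact Set.disjoint_left.mp disj_mp (mem_image_of_mem _ hz) hmem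
    · refine Set.disjoint_left.mp disj_pG hmem ?_
      rw [← mapm]; exact mem_image_of_mem _ hz
  have hdcont : ∀ i, ContinuousOn (dslope φm (ζ i)) (closedBall (0:ℂ) 1) := by
    intro i z hz
    rcases eq_or_ne z (ζ i) with rfl | hne
    · exact (continuousAt_dslope_same.mpr
        (holm.differentiableAt (isOpen_ball.mem_nhds (hζball i)))).continuousWithinAt
    · exact (continuousWithinAt_dslope_of_ne hne).mpr (contm z hz)
  have hddiff : ∀ i, DifferentiableOn ℂ (dslope φm (ζ i)) (ball (0:ℂ) 1) := fun i =>
    (differentiableOn_dslope (isOpen_ball.mem_nhds (hζball i))).mpr holm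
  have hdne : ∀ i, ∀ z ∈ closedBall (0:ℂ) 1, dslope φm (ζ i) z ≠ 0 := by
    intro i z hz
    rcases eq_or_ne z (ζ i) with rfl | hne
    · rw [dslope_same]; exact hderivm i
    · rw [dslope_of_ne _ hne, slope_def_field]
      apply div_ne_zero _ (sub_ne_zero.mpr hne)
      intro h0
      have heqr : φm z = φm (ζ i) := by rwa [sub_eq_zero] at h0
      rw [← ball_union_sphere] at hz
      rcases hz with hz' | hz'
      · exact hne (injm (ball_subset_closedBall hz') (ball_subset_closedBall (hζball i)) heqr)
      · refine Set.disjoint_left.mp disj_mG ⟨ζ i, hζball i, rfl⟩ ?_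
        rw [← mapm]
        exact ⟨z, hz', heqr⟩
  have hucont : ContinuousOn u (closedBall (0:ℂ) 1) :=
    continuousOn_const.mul (continuousOn_finset_prod _ (fun i _ => hdcont i))
  have hudiff : DifferentiableOn ℂ u (ball (0:ℂ) 1) :=
    (differentiableOn_const _).mul (DifferentiableOn.fun_finsetProd (fun i _ => hddiff i))
  have hune : ∀ z ∈ closedBall (0:ℂ) 1, u z ≠ 0 := fun z hz =>
    mul_ne_zero hc₁ (Finset.prod_ne_zero_iff.mpr (fun i _ => hdne i z hz))
  have hScont : ContinuousOn (fun z => P₂.eval (φm z)) (closedBall (0:ℂ) 1) :=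
    (Polynomial.continuous P₂).comp_continuousOn contm
  have hSdiff : DifferentiableOn ℂ (fun z => P₂.eval (φm z)) (ball (0:ℂ) 1) :=
    (Polynomial.differentiable P₂).comp_differentiableOn holm
  have hBcont : ContinuousOn (fun z : ℂ => ∏ i, (1 - (starRingEnd ℂ) (ζ i) * z))
      (closedBall (0:ℂ) 1) :=
    continuousOn_finset_prod _ (fun i _ =>
      continuousOn_const.sub (continuousOn_const.mul continuousOn_id))
  have hBdiff : DifferentiableOn ℂ (fun z : ℂ => ∏ i, (1 - (starRingEnd ℂ) (ζ i) * z))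
      (ball (0:ℂ) 1) :=
    DifferentiableOn.fun_finsetProd (fun i _ =>
      (differentiableOn_const _).sub ((differentiableOn_const _).mul differentiableOn_id))
  have hBne : ∀ z ∈ closedBall (0:ℂ) 1, (∏ i, (1 - (starRingEnd ℂ) (ζ i) * z)) ≠ 0 :=
    fun z hz => Finset.prod_ne_zero_iff.mpr (fun i _ =>
      one_sub_conj_mul_ne_zero (hζnorm i) (mem_closedBall_zero_iff.mp hz))
  set H : ℂ → ℂ := fun z =>
    u z * (∏ i, (1 - (starRingEnd ℂ) (ζ i) * z)) / P₂.eval (φm z) with hHdef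
  have hHd : DiffContOnCl ℂ H (ball (0:ℂ) 1) := by
    refine ⟨(hudiff.mul hBdiff).div hSdiff
      (fun z hz => hSne z (ball_subset_closedBall hz)), ?_⟩
    rw [closure_ball 0 one_ne_zero]
    exact (hucont.mul hBcont).div hScont hSne
  have hHne : ∀ z ∈ closedBall (0:ℂ) 1, H z ≠ 0 := fun z hz =>
    div_ne_zero (mul_ne_zero (hune z hz) (hBne z hz)) (hSne z hz)
  have hHnorm : ∀ z ∈ sphere (0:ℂ) 1, ‖H z‖ = 1 := by
    intro z hz
    have hz1 : ‖z‖ = 1 := mem_sphere_zero_iff_norm.mp hz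
    have hS := hSne z (sphere_subset_closedBall hz)
    have e1 : ∏ i, ‖1 - (starRingEnd ℂ) (ζ i) * z‖ = ∏ i, ‖z - ζ i‖ :=
      Finset.prod_congr rfl (fun i _ => norm_one_sub_conj_mul hz1)
    have e2 : ‖u z‖ * ∏ i, ‖z - ζ i‖ = ‖P₂.eval (φm z)‖ := by
      rw [← hΓm z hz, key1 z]
      simp [norm_mul, norm_prod]
    rw [hHdef]
    simp only
    rw [norm_div, norm_mul, norm_prod, e1, e2, div_self (norm_ne_zero_iff.mpr hS)]
  obtain ⟨hlam1, hHconst⟩ := eq_const_of_unimodular_boundary hHd hHne hHnorm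
  set lam := H 0 with hlamdef
  clear_value lam
  have part1 : ∀ z : ℂ, ‖z‖ ≤ 1 →
      P₁.eval (φm z) * ∏ i, (1 - (starRingEnd ℂ) (ζ i) * z)
        = lam * (P₂.eval (φm z) * ∏ i, (z - ζ i)) := by
    intro z hznorm
    have hz : z ∈ closedBall (0:ℂ) 1 := mem_closedBall_zero_iff.mpr hznorm
    have hH := hHconst z hz
    rw [hHdef] at hH
    simp only at hH
    rw [div_eq_iff (hSne z hz)] at hH
    rw [key1 z]
    linear_combination (∏ i, (z - ζ i)) * hH
  -- ============ PART (ii) ============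
  obtain ⟨d, hdpos, hdt⟩ := hdinf
  have hdC : (d : ℂ) ≠ 0 := by exact_mod_cast hdpos.ne'
  have hNpos : 0 < N := by omega
  have hNm : N + m = P₁.natDegree := by omega
  have hmN : m + N = P₁.natDegree := by omega
  have hηex : ∀ i, ∃ w, (1 < ‖w‖) ∧ φp w = sfn i := by
    intro i
    obtain ⟨w, hw, he⟩ := hroots2 (sfn i) (hsroot i)
    exact ⟨w, hw, he⟩
  choose η hηnorm hηeq using hηex
  have hηne : ∀ i, η i ≠ 0 := by
    intro i h
    have := hηnorm i
    rw [h, norm_zero] at this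
    linarith
  set ζ' : Fin m → ℂ := fun i => (η i)⁻¹ with hζ'def
  have hζ'norm : ∀ i, ‖ζ' i‖ < 1 := by
    intro i
    rw [hζ'def]
    simp only [norm_inv]
    exact inv_lt_one_of_one_lt₀ (hηnorm i)
  have hζ'ne : ∀ i, ζ' i ≠ 0 := fun i => inv_ne_zero (hηne i)
  set ψ : ℂ → ℂ := fun z => φp z⁻¹ with hψdef
  have hψζ' : ∀ i, ψ (ζ' i) = sfn i := by
    intro i
    rw [hψdef, hζ'def]
    simp only [inv_inv]
    exact hηeq i
  have hU0open : IsOpen (ball (0:ℂ) 1 \ {0}) := isOpen_ball.sdiff isClosed_singleton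
  have hKinv : ∀ z : ℂ, z ∈ closedBall (0:ℂ) 1 \ {0} → 1 ≤ ‖z⁻¹‖ := by
    intro z hz
    have h1 : ‖z‖ ≤ 1 := mem_closedBall_zero_iff.mp hz.1
    have h2 : z ≠ 0 := by simpa using hz.2
    rw [norm_inv]
    exact one_le_inv_iff₀.mpr ⟨norm_pos_iff.mpr h2, h1⟩
  have hUinv : ∀ z : ℂ, z ∈ ball (0:ℂ) 1 \ {0} → 1 < ‖z⁻¹‖ := by
    intro z hz
    have h1 : ‖z‖ < 1 := mem_ball_zero_iff.mp hz.1
    have h2 : z ≠ 0 := by simpa using hz.2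
    rw [norm_inv]
    exact one_lt_inv_iff₀.mpr ⟨norm_pos_iff.mpr h2, h1⟩
  have hζ'U : ∀ i, ζ' i ∈ ball (0:ℂ) 1 \ {0} := fun i =>
    ⟨mem_ball_zero_iff.mpr (hζ'norm i), by simpa using hζ'ne i⟩
  have hopenP : IsOpen {w : ℂ | 1 < ‖w‖} := isOpen_lt continuous_const continuous_norm
  have hψdiffat : ∀ z : ℂ, z ∈ ball (0:ℂ) 1 \ {0} → DifferentiableAt ℂ ψ z := by
    intro z hz
    have h2 : z ≠ 0 := by simpa using hz.2
    have h3 : DifferentiableAt ℂ φp z⁻¹ :=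
      holp.differentiableAt (hopenP.mem_nhds (hUinv z hz))
    exact h3.comp z (differentiableAt_id.inv h2)
  have hψdiff : DifferentiableOn ℂ ψ (ball (0:ℂ) 1 \ {0}) := fun z hz =>
    (hψdiffat z hz).differentiableWithinAt
  have hψcont : ContinuousOn ψ (closedBall (0:ℂ) 1 \ {0}) := by
    apply ContinuousOn.comp contp
    · exact continuousOn_id.inv₀ (fun z hz => by simpa using hz.2)
    · intro z hz
      exact hKinv z hz
  have hψinj : InjOn ψ (closedBall (0:ℂ) 1 \ {0}) := by
    intro p hp q hq hpq
    exact inv_injective (injp (hKinv p hp) (hKinv q hq) hpq)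
  have hderivp : ∀ i, deriv ψ (ζ' i) ≠ 0 := fun i =>
    deriv_ne_zero_of_injOn hU0open hψdiff
      (hψinj.mono (diff_subset_diff_left ball_subset_closedBall)) (hζ'U i)
  have hTne : ∀ z : ℂ, z ∈ closedBall (0:ℂ) 1 \ {0} → P₁.eval (ψ z) ≠ 0 := by
    intro z hz h0
    have hmem := hroots1 (ψ z) h0
    have h1 := hKinv z hz
    rcases eq_or_lt_of_le h1 with he | hlt
    · refine Set.disjoint_left.mp disj_mG hmem ?_
      rw [← mapp]
      exact ⟨z⁻¹, mem_sphere_zero_iff_norm.mpr he.symm, rfl⟩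
    · exact Set.disjoint_left.mp disj_mp hmem ⟨z⁻¹, hlt, rfl⟩
  set v : ℂ → ℂ := fun z => c₂ * ∏ i, dslope ψ (ζ' i) z with hvdef
  have key2 : ∀ z : ℂ, P₂.eval (ψ z) = v z * ∏ i, (z - ζ' i) := by
    intro z
    rw [hseval, hvdef]
    simp only
    rw [mul_assoc, ← Finset.prod_mul_distrib]
    congr 1
    apply Finset.prod_congr rfl
    intro i _
    have hds := sub_smul_dslope ψ (ζ' i) z
    rw [smul_eq_mul] at hds
    rw [← hψζ' i, ← hds]; ring
  have hvcont : ContinuousOn v (closedBall (0:ℂ) 1 \ {0}) := by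
    apply continuousOn_const.mul
    apply continuousOn_finset_prod
    intro i _ z hz
    rcases eq_or_ne z (ζ' i) with rfl | hne
    · exact (continuousAt_dslope_same.mpr (hψdiffat _ (hζ'U i))).continuousWithinAt
    · exact (continuousWithinAt_dslope_of_ne hne).mpr (hψcont z hz)
  have hvdiff : DifferentiableOn ℂ v (ball (0:ℂ) 1 \ {0}) := by
    apply (differentiableOn_const _).mul
    apply DifferentiableOn.fun_finsetProd
    intro i _
    exact (differentiableOn_dslope (hU0open.mem_nhds (hζ'U i))).mpr hψdiff
  have hvne : ∀ z : ℂ, z ∈ closedBall (0:ℂ) 1 \ {0} → v z ≠ 0 := by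
    intro z hz
    apply mul_ne_zero hc₂
    apply Finset.prod_ne_zero_iff.mpr
    intro i _
    rcases eq_or_ne z (ζ' i) with rfl | hne
    · rw [dslope_same]; exact hderivp i
    · rw [dslope_of_ne _ hne, slope_def_field]
      apply div_ne_zero _ (sub_ne_zero.mpr hne)
      intro h0
      have heqs : ψ z = ψ (ζ' i) := by rwa [sub_eq_zero] at h0
      have h2 : (1:ℝ) ≤ ‖(ζ' i)⁻¹‖ := by
        rw [hζ'def]
        simp only [inv_inv]
        exact (hηnorm i).le
      exact hne (inv_injective (injp (hKinv z hz) h2 heqs))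
  set rfun : ℂ → ℂ := fun z => v z / (z ^ N * P₁.eval (ψ z)) with hrdef
  have hrcont : ContinuousOn rfun (closedBall (0:ℂ) 1 \ {0}) := by
    apply hvcont.div
    · exact (continuousOn_id.pow N).mul ((Polynomial.continuous P₁).comp_continuousOn hψcont)
    · intro z hz
      exact mul_ne_zero (pow_ne_zero _ (by simpa using hz.2)) (hTne z hz)
  have hrdiff : DifferentiableOn ℂ rfun (ball (0:ℂ) 1 \ {0}) := by
    apply hvdiff.div
    · exact (differentiableOn_id.pow N).mul
        ((Polynomial.differentiable P₁).comp_differentiableOn hψdiff)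
    · intro z hz
      exact mul_ne_zero (pow_ne_zero _ (by simpa using hz.2))
        (hTne z ⟨ball_subset_closedBall hz.1, hz.2⟩)
  have hrne : ∀ z : ℂ, z ∈ closedBall (0:ℂ) 1 \ {0} → rfun z ≠ 0 := fun z hz =>
    div_ne_zero (hvne z hz)
      (mul_ne_zero (pow_ne_zero _ (by simpa using hz.2)) (hTne z hz))
  -- limit at the puncture
  have hz0lim : Filter.Tendsto (fun z : ℂ => z) (nhdsWithin 0 {0}ᶜ) (nhds 0) :=
    Filter.tendsto_id.mono_left nhdsWithin_le_nhds
  have hzψ : Filter.Tendsto (fun z : ℂ => z * ψ z) (nhdsWithin 0 {0}ᶜ) (nhds (d:ℂ)) := by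
    have h1 : Filter.Tendsto (fun z : ℂ => z⁻¹) (nhdsWithin (0:ℂ) {0}ᶜ)
        (Bornology.cobounded ℂ) := Filter.tendsto_inv₀_nhdsNE_zero
    have h2 := hdt.comp h1
    have heq : (fun z : ℂ => φp z⁻¹ / z⁻¹) =ᶠ[nhdsWithin (0:ℂ) {0}ᶜ]
        (fun z => z * ψ z) := by
      filter_upwards [self_mem_nhdsWithin] with z hz
      have hz0 : z ≠ 0 := hz
      rw [hψdef]
      simp only
      rw [div_inv_eq_mul]
      ring
    exact Filter.Tendsto.congr' heq h2
  have hfac1 : ∀ c : ℂ, Filter.Tendsto (fun z : ℂ => z * ψ z - z * c)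
      (nhdsWithin 0 {0}ᶜ) (nhds (d:ℂ)) := by
    intro c
    have := hzψ.sub (hz0lim.mul_const c)
    simpa using this
  set g1 : ℂ → ℂ := fun z => c₂ * ∏ i : Fin m, (z * ψ z - z * sfn i) with hg1def
  set g2 : ℂ → ℂ := fun z =>
    (∏ i : Fin m, (z - ζ' i)) * (c₁ * ∏ i : Fin P₁.natDegree, (z * ψ z - z * r i)) with hg2def
  have hg1lim : Filter.Tendsto g1 (nhdsWithin 0 {0}ᶜ) (nhds (c₂ * (d:ℂ) ^ m)) := by
    have := tendsto_const_nhds (x := c₂) (f := nhdsWithin (0:ℂ) {0}ᶜ) |>.mul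
      (tendsto_finset_prod (Finset.univ : Finset (Fin m))
        (fun i _ => hfac1 (sfn i)))
    simpa [Finset.prod_const, Finset.card_univ] using this
  set A' : ℂ := ∏ i : Fin m, ((0:ℂ) - ζ' i) with hA'def
  have hA'ne : A' ≠ 0 :=
    Finset.prod_ne_zero_iff.mpr (fun i _ => by
      rw [zero_sub]
      exact neg_ne_zero.mpr (hζ'ne i))
  have hg2lim : Filter.Tendsto g2 (nhdsWithin 0 {0}ᶜ)
      (nhds (A' * (c₁ * (d:ℂ) ^ P₁.natDegree))) := by
    have t1 : Filter.Tendsto (fun z : ℂ => ∏ i : Fin m, (z - ζ' i))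
        (nhdsWithin 0 {0}ᶜ) (nhds A') :=
      tendsto_finset_prod _ (fun i _ => hz0lim.sub_const (ζ' i))
    have t2 := tendsto_const_nhds (x := c₁) (f := nhdsWithin (0:ℂ) {0}ᶜ) |>.mul
      (tendsto_finset_prod (Finset.univ : Finset (Fin P₁.natDegree))
        (fun i _ => hfac1 (r i)))
    have := t1.mul t2
    simpa [Finset.prod_const, Finset.card_univ] using this
  have hg2ne : A' * (c₁ * (d:ℂ) ^ P₁.natDegree) ≠ 0 :=
    mul_ne_zero hA'ne (mul_ne_zero hc₁ (pow_ne_zero _ hdC))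
  set κ : ℂ := (c₂ * (d:ℂ) ^ m) / (A' * (c₁ * (d:ℂ) ^ P₁.natDegree)) with hκdef
  have hκne : κ ≠ 0 :=
    div_ne_zero (mul_ne_zero hc₂ (pow_ne_zero _ hdC)) hg2ne
  have hev : rfun =ᶠ[nhdsWithin (0:ℂ) {0}ᶜ] (fun z => g1 z / g2 z) := by
    have hball0 : ball (0:ℂ) 1 ∈ nhds (0:ℂ) := ball_mem_nhds 0 one_pos
    have hne_ζ : ∀ᶠ z : ℂ in nhds (0:ℂ), ∀ i, z ≠ ζ' i := by
      rw [Filter.eventually_all]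
      intro i
      exact eventually_ne_nhds (Ne.symm (hζ'ne i))
    filter_upwards [nhdsWithin_le_nhds hball0, nhdsWithin_le_nhds hne_ζ,
      self_mem_nhdsWithin] with z hz1 hz2 hz3
    have hz0 : z ≠ 0 := hz3
    have hzK : z ∈ closedBall (0:ℂ) 1 \ {0} := ⟨ball_subset_closedBall hz1, by simpa using hz0⟩
    have hZne : (∏ i : Fin m, (z - ζ' i)) ≠ 0 :=
      Finset.prod_ne_zero_iff.mpr (fun i _ => sub_ne_zero.mpr (hz2 i))
    have hPrne : (∏ i : Fin P₁.natDegree, (ψ z - r i)) ≠ 0 := by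
      intro h
      apply hTne z hzK
      rw [hreval (ψ z), h, mul_zero]
    have hv : v z = c₂ * ((∏ i, (ψ z - sfn i)) / (∏ i, (z - ζ' i))) := by
      rw [hvdef]
      simp only
      rw [← Finset.prod_div_distrib]
      congr 1
      apply Finset.prod_congr rfl
      intro i _
      rw [dslope_of_ne _ (hz2 i), slope_def_field, hψζ' i]
    have e1 : ∏ i : Fin m, (z * ψ z - z * sfn i) = z ^ m * ∏ i, (ψ z - sfn i) := by
      calc ∏ i : Fin m, (z * ψ z - z * sfn i) = ∏ i : Fin m, (z * (ψ z - sfn i)) :=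
            Finset.prod_congr rfl (fun i _ => by ring)
        _ = (∏ _i : Fin m, z) * ∏ i, (ψ z - sfn i) := Finset.prod_mul_distrib
        _ = z ^ m * ∏ i, (ψ z - sfn i) := by
            rw [Finset.prod_const, Finset.card_univ, Fintype.card_fin]
    have e2 : ∏ i : Fin P₁.natDegree, (z * ψ z - z * r i)
        = z ^ P₁.natDegree * ∏ i, (ψ z - r i) := by
      calc ∏ i : Fin P₁.natDegree, (z * ψ z - z * r i)
          = ∏ i : Fin P₁.natDegree, (z * (ψ z - r i)) :=
            Finset.prod_congr rfl (fun i _ => by ring)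
        _ = (∏ _i : Fin P₁.natDegree, z) * ∏ i, (ψ z - r i) := Finset.prod_mul_distrib
        _ = z ^ P₁.natDegree * ∏ i, (ψ z - r i) := by
            rw [Finset.prod_const, Finset.card_univ, Fintype.card_fin]
    rw [hrdef, hg1def, hg2def]
    simp only
    rw [hv, hreval (ψ z), e1, e2]
    have hzn : (z : ℂ) ^ P₁.natDegree = z ^ N * z ^ m := by
      rw [← pow_add, hNm]
    rw [hzn]
    have hD1 : z ^ N * (c₁ * ∏ i : Fin P₁.natDegree, (ψ z - r i)) ≠ 0 :=
      mul_ne_zero (pow_ne_zero _ hz0) (mul_ne_zero hc₁ hPrne)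
    have hD2 : (∏ i : Fin m, (z - ζ' i)) * (c₁ * (z ^ N * z ^ m *
        ∏ i : Fin P₁.natDegree, (ψ z - r i))) ≠ 0 :=
      mul_ne_zero hZne (mul_ne_zero hc₁ (mul_ne_zero
        (mul_ne_zero (pow_ne_zero _ hz0) (pow_ne_zero _ hz0)) hPrne))
    rw [div_eq_div_iff hD1 hD2]
    field_simp [hZne]
  have hrlim : Filter.Tendsto rfun (nhdsWithin (0:ℂ) {0}ᶜ) (nhds κ) := by
    have hdiv := hg1lim.div hg2lim hg2ne
    exact Filter.Tendsto.congr' hev.symm hdiv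
  set rt : ℂ → ℂ := Function.update rfun 0 κ with hrtdef
  have hmem0 : ball (0:ℂ) 1 ∈ nhds (0:ℂ) := ball_mem_nhds 0 one_pos
  have hrt_eq : ∀ z : ℂ, z ≠ 0 → rt z = rfun z := fun z hz =>
    Function.update_of_ne hz _ _
  have hrtdiff : DifferentiableOn ℂ rt (ball (0:ℂ) 1) := by
    refine (differentiableOn_compl_singleton_and_continuousAt_iff hmem0).mp ⟨?_, ?_⟩
    · exact hrdiff.congr (fun x hx => hrt_eq x (by simpa using hx.2))
    · rw [hrtdef]
      exact continuousAt_update_same.mpr hrlim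
  have hrtcont : ContinuousOn rt (closedBall (0:ℂ) 1) := by
    intro z hz
    rcases eq_or_ne z 0 with rfl | hne
    · exact ((hrtdiff.differentiableAt hmem0).continuousAt).continuousWithinAt
    · have h1 : ContinuousWithinAt rfun (closedBall (0:ℂ) 1 \ {0}) z :=
        hrcont z ⟨hz, by simpa using hne⟩
      have h2 : ContinuousWithinAt rt (closedBall (0:ℂ) 1 \ {0}) z :=
        h1.congr (fun x hx => hrt_eq x (by simpa using hx.2)) (hrt_eq z hne)
      apply h2.mono_of_mem_nhdsWithin
      rw [diff_eq]
      exact Filter.inter_mem self_mem_nhdsWithin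
        (mem_nhdsWithin_of_mem_nhds (compl_singleton_mem_nhds hne))
  have hrtne : ∀ z ∈ closedBall (0:ℂ) 1, rt z ≠ 0 := by
    intro z hz
    rcases eq_or_ne z 0 with rfl | hne
    · rw [hrtdef, Function.update_self]
      exact hκne
    · rw [hrt_eq z hne]
      exact hrne z ⟨hz, by simpa using hne⟩
  -- the candidate constant function
  have hB2cont : ContinuousOn (fun z : ℂ => ∏ i : Fin m, (1 - (starRingEnd ℂ) (ζ' i) * z))
      (closedBall (0:ℂ) 1) :=
    continuousOn_finset_prod _ (fun i _ =>
      continuousOn_const.sub (continuousOn_const.mul continuousOn_id))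
  have hB2diff : DifferentiableOn ℂ
      (fun z : ℂ => ∏ i : Fin m, (1 - (starRingEnd ℂ) (ζ' i) * z)) (ball (0:ℂ) 1) :=
    DifferentiableOn.fun_finsetProd (fun i _ =>
      (differentiableOn_const _).sub ((differentiableOn_const _).mul differentiableOn_id))
  have hB2ne : ∀ z ∈ closedBall (0:ℂ) 1,
      (∏ i : Fin m, (1 - (starRingEnd ℂ) (ζ' i) * z)) ≠ 0 :=
    fun z hz => Finset.prod_ne_zero_iff.mpr (fun i _ =>
      one_sub_conj_mul_ne_zero (hζ'norm i) (mem_closedBall_zero_iff.mp hz))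
  set H₂ : ℂ → ℂ := fun z => rt z * ∏ i : Fin m, (1 - (starRingEnd ℂ) (ζ' i) * z) with hH₂def
  have hH₂d : DiffContOnCl ℂ H₂ (ball (0:ℂ) 1) := by
    refine ⟨hrtdiff.mul hB2diff, ?_⟩
    rw [closure_ball 0 one_ne_zero]
    exact hrtcont.mul hB2cont
  have hH₂ne : ∀ z ∈ closedBall (0:ℂ) 1, H₂ z ≠ 0 := fun z hz =>
    mul_ne_zero (hrtne z hz) (hB2ne z hz)
  have hH₂norm : ∀ z ∈ sphere (0:ℂ) 1, ‖H₂ z‖ = 1 := by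
    intro z hz
    have hz1 : ‖z‖ = 1 := mem_sphere_zero_iff_norm.mp hz
    have hz0 : z ≠ 0 := by
      intro h
      rw [h, norm_zero] at hz1
      norm_num at hz1
    have hzK : z ∈ closedBall (0:ℂ) 1 \ {0} :=
      ⟨sphere_subset_closedBall hz, by simpa using hz0⟩
    have hT := hTne z hzK
    have hΓp : ‖P₁.eval (ψ z)‖ = ‖P₂.eval (ψ z)‖ := by
      have hzi : z⁻¹ ∈ sphere (0:ℂ) 1 := by
        rw [mem_sphere_zero_iff_norm, norm_inv, hz1]
        norm_num
      have : ψ z ∈ {x : ℂ | ‖P₁.eval x‖ = ‖P₂.eval x‖} := by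
        rw [← mapp]
        exact ⟨z⁻¹, hzi, rfl⟩
      exact this
    have e1 : ∏ i : Fin m, ‖1 - (starRingEnd ℂ) (ζ' i) * z‖ = ∏ i, ‖z - ζ' i‖ :=
      Finset.prod_congr rfl (fun i _ => norm_one_sub_conj_mul hz1)
    have e2 : ‖v z‖ * ∏ i, ‖z - ζ' i‖ = ‖P₂.eval (ψ z)‖ := by
      rw [key2 z]
      simp [norm_mul, norm_prod]
    have hfe : H₂ z * (z ^ N * P₁.eval (ψ z))
        = v z * ∏ i : Fin m, (1 - (starRingEnd ℂ) (ζ' i) * z) := by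
      rw [hH₂def]
      simp only [hrt_eq z hz0, hrdef]
      field_simp
      congr 1
      exact Finset.prod_congr rfl (fun i _ => by ring)
    have h2 : ‖v z * ∏ i : Fin m, (1 - (starRingEnd ℂ) (ζ' i) * z)‖ = ‖P₂.eval (ψ z)‖ := by
      rw [← e2, ← e1]
      simp [norm_mul, norm_prod]
    have h3 : ‖H₂ z * (z ^ N * P₁.eval (ψ z))‖ = ‖H₂ z‖ * ‖P₁.eval (ψ z)‖ := by
      rw [norm_mul (H₂ z) _, norm_mul (z ^ N) _, norm_pow, hz1, one_pow, one_mul]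
    have h4 : ‖H₂ z‖ * ‖P₁.eval (ψ z)‖ = ‖P₁.eval (ψ z)‖ := by
      rw [← h3, hfe, h2, ← hΓp]
    have hTpos : 0 < ‖P₁.eval (ψ z)‖ := norm_pos_iff.mpr hT
    exact mul_right_cancel₀ (ne_of_gt hTpos) (by rw [h4, one_mul])
  obtain ⟨hν1, hH₂const⟩ := eq_const_of_unimodular_boundary hH₂d hH₂ne hH₂norm
  set ν := H₂ 0 with hνdef
  clear_value ν
  have hν0 : ν ≠ 0 := by
    intro h
    rw [h, norm_zero] at hν1
    norm_num at hν1
  have part2' : ∀ z : ℂ, z ∈ closedBall (0:ℂ) 1 \ {0} →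
      v z * ∏ i : Fin m, (1 - (starRingEnd ℂ) (ζ' i) * z)
        = ν * (z ^ N * P₁.eval (ψ z)) := by
    intro z hz
    have hX : z ^ N * P₁.eval (ψ z) ≠ 0 :=
      mul_ne_zero (pow_ne_zero _ (by simpa using hz.2)) (hTne z hz)
    have hc := hH₂const z hz.1
    rw [hH₂def] at hc
    simp only at hc
    rw [hrt_eq z (by simpa using hz.2), hrdef] at hc
    simp only at hc
    rw [div_mul_eq_mul_div, div_eq_iff hX] at hc
    linear_combination hc
  -- Blaschke zeros for the exterior map
  set afn : ℕ → ℂ := fun k => if h : k < m then (starRingEnd ℂ) (ζ' ⟨k, h⟩) else 0 with hafndef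
  set a : Fin P₁.natDegree → ℂ := fun i => afn i with hadef
  have ha_norm : ∀ i, ‖a i‖ < 1 := by
    intro i
    rw [hadef, hafndef]
    simp only
    split_ifs with h
    · rw [RCLike.norm_conj]; exact hζ'norm _
    · simp
  have ha_zero : a ⟨m, hdeg2⟩ = 0 := by
    rw [hadef, hafndef]
    simp only
    rw [dif_neg (lt_irrefl m)]
  have hprodA : ∀ g : ℂ → ℂ, ∏ i : Fin P₁.natDegree, g (a i)
      = (∏ i : Fin m, g ((starRingEnd ℂ) (ζ' i))) * (g 0) ^ N := by
    intro g
    have h1 : ∏ i : Fin P₁.natDegree, g (a i)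
        = ∏ k ∈ Finset.range P₁.natDegree, g (afn k) := by
      rw [← Fin.prod_univ_eq_prod_range (fun k => g (afn k)) P₁.natDegree]
    rw [h1, ← hmN, Finset.prod_range_add]
    congr 1
    · rw [← Fin.prod_univ_eq_prod_range (fun k => g (afn k)) m]
      apply Finset.prod_congr rfl
      intro i _
      congr 1
      rw [hafndef]
      simp only
      rw [dif_pos i.isLt]
    · have hcon : ∀ x ∈ Finset.range N, g (afn (m + x)) = g 0 := by
        intro x _
        congr 1
        rw [hafndef]
        simp only
        rw [dif_neg (by omega)]
      rw [Finset.prod_congr rfl hcon, Finset.prod_const, Finset.card_range]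
  have part2 : ∀ w : ℂ, 1 ≤ ‖w‖ →
      P₁.eval (φp w) * ∏ i, (1 - (starRingEnd ℂ) (a i) * w)
        = ν⁻¹ * (P₂.eval (φp w) * ∏ i, (w - a i)) := by
    intro w hw
    have hw0 : w ≠ 0 := by
      intro h
      rw [h, norm_zero] at hw
      linarith
    have hz0 : w⁻¹ ≠ 0 := inv_ne_zero hw0
    have hzK : w⁻¹ ∈ closedBall (0:ℂ) 1 \ {0} := by
      constructor
      · rw [mem_closedBall_zero_iff, norm_inv]
        exact inv_le_one_of_one_le₀ hw
      · simpa using hz0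
    have hψz : ψ w⁻¹ = φp w := by
      rw [hψdef]
      simp only [inv_inv]
    have hE := part2' w⁻¹ hzK
    have hK2 := key2 w⁻¹
    rw [hψz] at hE hK2
    have hA1 : ∏ i : Fin P₁.natDegree, (1 - (starRingEnd ℂ) (a i) * w)
        = ∏ i : Fin m, (1 - ζ' i * w) := by
      have := hprodA (fun x => 1 - (starRingEnd ℂ) x * w)
      simpa using this
    have hA2 : ∏ i : Fin P₁.natDegree, (w - a i)
        = (∏ i : Fin m, (w - (starRingEnd ℂ) (ζ' i))) * w ^ N := by
      have := hprodA (fun x => w - x)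
      simpa using this
    have hfA : ∏ i : Fin m, (w⁻¹ - ζ' i)
        = (∏ i : Fin m, (1 - ζ' i * w)) * w⁻¹ ^ m := by
      calc ∏ i : Fin m, (w⁻¹ - ζ' i) = ∏ i : Fin m, ((1 - ζ' i * w) * w⁻¹) :=
            Finset.prod_congr rfl (fun i _ => by field_simp; try ring)
        _ = (∏ i : Fin m, (1 - ζ' i * w)) * ∏ _i : Fin m, (w⁻¹ : ℂ) :=
            Finset.prod_mul_distrib
        _ = (∏ i : Fin m, (1 - ζ' i * w)) * w⁻¹ ^ m := by
            rw [Finset.prod_const, Finset.card_univ, Fintype.card_fin]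
    have hfB : ∏ i : Fin m, (1 - (starRingEnd ℂ) (ζ' i) * w⁻¹)
        = (∏ i : Fin m, (w - (starRingEnd ℂ) (ζ' i))) * w⁻¹ ^ m := by
      calc ∏ i : Fin m, (1 - (starRingEnd ℂ) (ζ' i) * w⁻¹)
          = ∏ i : Fin m, ((w - (starRingEnd ℂ) (ζ' i)) * w⁻¹) :=
            Finset.prod_congr rfl (fun i _ => by field_simp; try ring)
        _ = (∏ i : Fin m, (w - (starRingEnd ℂ) (ζ' i))) * ∏ _i : Fin m, (w⁻¹ : ℂ) :=
            Finset.prod_mul_distrib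
        _ = (∏ i : Fin m, (w - (starRingEnd ℂ) (ζ' i))) * w⁻¹ ^ m := by
            rw [Finset.prod_const, Finset.card_univ, Fintype.card_fin]
    have hνν : ν * ν⁻¹ = 1 := mul_inv_cancel₀ hν0
    have hfC : w ^ N * w⁻¹ ^ N = 1 := by
      rw [← mul_pow, mul_inv_cancel₀ hw0, one_pow]
    rw [hA1, hA2]
    have hcne : ν * w⁻¹ ^ m * w⁻¹ ^ N ≠ 0 :=
      mul_ne_zero (mul_ne_zero hν0 (pow_ne_zero _ hz0)) (pow_ne_zero _ hz0)
    apply mul_left_cancel₀ hcne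
    calc ν * w⁻¹ ^ m * w⁻¹ ^ N * (P₁.eval (φp w) * ∏ i : Fin m, (1 - ζ' i * w))
        = (ν * (w⁻¹ ^ N * P₁.eval (φp w)))
            * ((∏ i : Fin m, (1 - ζ' i * w)) * w⁻¹ ^ m) := by ring
      _ = (v w⁻¹ * ∏ i : Fin m, (1 - (starRingEnd ℂ) (ζ' i) * w⁻¹))
            * (∏ i : Fin m, (w⁻¹ - ζ' i)) := by rw [← hE, ← hfA]
      _ = (v w⁻¹ * ∏ i : Fin m, (w⁻¹ - ζ' i))
            * ((∏ i : Fin m, (w - (starRingEnd ℂ) (ζ' i))) * w⁻¹ ^ m) := by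
          rw [hfB]; ring
      _ = P₂.eval (φp w) * ((∏ i : Fin m, (w - (starRingEnd ℂ) (ζ' i))) * w⁻¹ ^ m) := by
          rw [← hK2]
      _ = ν * w⁻¹ ^ m * w⁻¹ ^ N * (ν⁻¹ * (P₂.eval (φp w)
            * ((∏ i : Fin m, (w - (starRingEnd ℂ) (ζ' i))) * w ^ N))) := by
          linear_combination
            (-(P₂.eval (φp w) * (∏ i : Fin m, (w - (starRingEnd ℂ) (ζ' i))) * w⁻¹ ^ m)) * hfC
            + (-(P₂.eval (φp w) * (∏ i : Fin m, (w - (starRingEnd ℂ) (ζ' i))) * w⁻¹ ^ m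
                * w ^ N * w⁻¹ ^ N)) * hνν
  have hAne : ∀ w : ℂ, ‖w‖ ≤ 1 →
      (∏ i : Fin P₁.natDegree, (1 - (starRingEnd ℂ) (a i) * w)) ≠ 0 :=
    fun w hw => Finset.prod_ne_zero_iff.mpr (fun i _ =>
      one_sub_conj_mul_ne_zero (ha_norm i) hw)
  refine ⟨ζ, lam, a, ν⁻¹, hζnorm, hlam1, part1, ha_norm, ⟨⟨m, hdeg2⟩, ha_zero⟩, ?_, part2, ?_⟩
  · rw [norm_inv, hν1]; norm_num
  · intro z w hz1 hw1 hpw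
    have hSz : P₂.eval (φm z) ≠ 0 := hSne z (mem_closedBall_zero_iff.mpr hz1.le)
    have hp1 := part1 z hz1.le
    have hp2 := part2 w hw1.ge
    rw [hpw] at hp2
    have hBz : (∏ i : Fin P₁.natDegree, (1 - (starRingEnd ℂ) (ζ i) * z)) ≠ 0 :=
      hBne z (mem_closedBall_zero_iff.mpr hz1.le)
    have hAw : (∏ i : Fin P₁.natDegree, (1 - (starRingEnd ℂ) (a i) * w)) ≠ 0 :=
      hAne w hw1.le
    rw [Finset.prod_div_distrib, Finset.prod_div_distrib]
    have h1 : ν⁻¹ * ((∏ i : Fin P₁.natDegree, (w - a i))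
          / (∏ i : Fin P₁.natDegree, (1 - (starRingEnd ℂ) (a i) * w)))
        = P₁.eval (φm z) / P₂.eval (φm z) := by
      have hνν : ν * ν⁻¹ = 1 := mul_inv_cancel₀ hν0
      rw [eq_div_iff hSz, mul_div_assoc', div_mul_eq_mul_div, div_eq_iff hAw]
      linear_combination -hp2
    have h2 : lam * ((∏ i : Fin P₁.natDegree, (z - ζ i))
          / (∏ i : Fin P₁.natDegree, (1 - (starRingEnd ℂ) (ζ i) * z)))
        = P₁.eval (φm z) / P₂.eval (φm z) := by
      rw [eq_div_iff hSz, mul_div_assoc', div_mul_eq_mul_div, div_eq_iff hBz]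
      linear_combination -hp1
    exact h1.trans h2.symm
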